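/- arXiv:2502.03308 — 3 statements merged into one kernel-verified Lean document; each statement's English description precedes it below -/
import Mathlib

section
/- Let G be a finite group and fix an element x ∈ G of order p₁^{α₁} ⋯ p_k^{α_k}, where p₁, …, p_k are distinct primes and each α_i is a positive integer, and let x_i denote the p_i-component of x (the power of x that is a p_i-element, with x = x₁ ⋯ x_k and the x_i pairwise commuting). Then Nil_G(x) = ⋂_{i=1}^{k} Nil_G(x_i). -/
/-- The nilpotent neighborhood of `x`: elements `y` such that `⟨x,y⟩` is nilpotent. -/
def nilNbhd {G : Type*} [Group G] (x : G) : Set G :=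
  {y | Group.IsNilpotent ↥(Subgroup.closure ({x, y} : Set G))}

/-- The hypercenter of a finite group: the stable term of the upper central series. -/
noncomputable def hypercenter (G : Type*) [Group G] : Subgroup G :=
  upperCentralSeries G (Nat.card G)

instance hypercenter_normal (G : Type*) [Group G] : (hypercenter G).Normal :=
  (inferInstance : (Subgroup.upperCentralSeries G (Nat.card G)).Normal)

/-- The graph Γ(G): induced subgraph of the nilpotent graph on `G \ Z_∞(G)`. -/
def nilGraph (G : Type*) [Group G] : SimpleGraph {x : G // x ∉ hypercenter G} where
  Adj a b := a ≠ b ∧ Group.IsNilpotent ↥(Subgroup.closure ({a.1, b.1} : Set G))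
  symm := ⟨fun a b ⟨h1, h2⟩ => ⟨h1.symm, by rwa [Set.pair_comm]⟩⟩
  loopless := ⟨fun a h => h.1 rfl⟩

/-- The commuting graph on the non-central elements. -/
def commGraph (G : Type*) [Group G] : SimpleGraph {x : G // x ∉ Subgroup.center G} where
  Adj a b := a ≠ b ∧ a.1 * b.1 = b.1 * a.1
  symm := ⟨fun a b ⟨h1, h2⟩ => ⟨h1.symm, h2.symm⟩⟩
  loopless := ⟨fun a h => h.1 rfl⟩

/-- Diameter of a connected component: diameter of the induced subgraph on its support. -/
noncomputable def compDiam {V : Type*} (Γ : SimpleGraph V) (c : Γ.ConnectedComponent) : ℕ :=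
  (Γ.induce c.supp).diam

/-- `H` is a Frobenius complement in `G`. -/
def IsFrobeniusComplement {G : Type*} [Group G] (H : Subgroup G) : Prop :=
  H ≠ ⊥ ∧ H ≠ ⊤ ∧ ∀ g : G, g ∉ H → H ⊓ H.map (MulAut.conj g).toMonoidHom = ⊥

/-- `G` is a Frobenius group. -/
def IsFrobenius (G : Type*) [Group G] : Prop :=
  ∃ H : Subgroup G, IsFrobeniusComplement H

/-- `K` is the Frobenius kernel corresponding to the complement `H`. -/
def IsFrobeniusKernelOf {G : Type*} [Group G] (K H : Subgroup G) : Prop :=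
  IsFrobeniusComplement H ∧
    (K : Set G) = {1} ∪ {x : G | ∀ g : G, x ∉ H.map (MulAut.conj g).toMonoidHom}

/-- `K` is a Frobenius kernel of `G`. -/
def IsFrobeniusKernel {G : Type*} [Group G] (K : Subgroup G) : Prop :=
  ∃ H : Subgroup G, IsFrobeniusKernelOf K H

/-- `G` is a 2-Frobenius group. -/
def IsTwoFrobenius (G : Type*) [Group G] : Prop :=
  ∃ K L : Subgroup G, ∃ hK : K.Normal, L.Normal ∧ K ≤ L ∧
    IsFrobeniusKernel (K.subgroupOf L) ∧
    (haveI := hK; IsFrobeniusKernel (Subgroup.map (QuotientGroup.mk' K) L))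

/-- The Fitting subgroup: the largest normal nilpotent subgroup (of a finite group). -/
def fitting (G : Type*) [Group G] : Subgroup G :=
  sSup {H : Subgroup G | H.Normal ∧ Group.IsNilpotent ↥H}

section Aux
open Subgroup Finset


lemma myIsNilpotent_of_le {G : Type*} [Group G] {K L : Subgroup G} (h : K ≤ L)
    (hL : Group.IsNilpotent ↥L) : Group.IsNilpotent ↥K := by
  haveI := hL
  exact nilpotent_of_mulEquiv (Subgroup.subgroupOfEquivOfLe h)

lemma myIsPGroup_zpowers {G : Type*} [Group G] {g : G} {q m : ℕ}
    (hg : orderOf g = q ^ m) : IsPGroup q (Subgroup.zpowers g) := by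
  intro ⟨a, ha⟩
  obtain ⟨j, rfl⟩ := Subgroup.mem_zpowers_iff.mp ha
  refine ⟨m, ?_⟩
  ext
  push_cast
  rw [← zpow_natCast, ← zpow_mul, mul_comm, zpow_mul, zpow_natCast, ← hg,
    pow_orderOf_eq_one, one_zpow]

lemma myMem_sylow {H : Type*} [Group H] [Finite H] {q : ℕ} [Fact q.Prime]
    (Q : Sylow q H) (hQ : (Q : Subgroup H).Normal) {a : H} {m : ℕ}
    (ha : orderOf a = q ^ m) : a ∈ Q := by
  obtain ⟨Q', hQQ'⟩ := (myIsPGroup_zpowers ha).exists_le_sylow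
  haveI := Sylow.unique_of_normal Q hQ
  have : Q' = Q := Subsingleton.elim _ _
  exact this ▸ hQQ' (Subgroup.mem_zpowers a)

lemma myCommute_nilpotent {H : Type*} [Group H] [Finite H] [Group.IsNilpotent H]
    {q r : ℕ} (hq : q.Prime) (hr : r.Prime) (hne : q ≠ r) {a b : H} {m l : ℕ}
    (ha : orderOf a = q ^ m) (hb : orderOf b = r ^ l) : Commute a b := by
  haveI : Fact q.Prime := ⟨hq⟩
  haveI : Fact r.Prime := ⟨hr⟩
  have hsyl := ((isNilpotent_of_finite_tfae (G := H)).out 0 3).mp ‹_›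
  obtain ⟨Q⟩ := (Sylow.nonempty (p := q) (G := H))
  obtain ⟨R⟩ := (Sylow.nonempty (p := r) (G := H))
  have hQn := hsyl q ‹_› Q
  have hRn := hsyl r ‹_› R
  exact Subgroup.commute_of_normal_of_disjoint Q R hQn hRn
    (IsPGroup.disjoint_of_ne q r hne _ _ Q.isPGroup' R.isPGroup')
    a b (myMem_sylow Q hQn ha) (myMem_sylow R hRn hb)

open Subgroup

lemma mySplit {G : Type*} [Group G] {g : G} {m n : ℕ} (hmn : m.Coprime n)
    (hg : orderOf g = m * n) (hm : m ≠ 0) (hn : n ≠ 0) :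
    ∃ a b : G, a ∈ Subgroup.zpowers g ∧ b ∈ Subgroup.zpowers g ∧
      orderOf a = m ∧ orderOf b = n ∧ g = a * b := by
  have hbez := Nat.gcd_eq_gcd_ab m n
  rw [Nat.Coprime.gcd_eq_one hmn] at hbez
  set s := m.gcdA n
  set t := m.gcdB n
  refine ⟨g ^ ((n : ℤ) * t), g ^ ((m : ℤ) * s), zpow_mem (mem_zpowers g) _,
    zpow_mem (mem_zpowers g) _, ?_⟩
  have hgeq : g = g ^ ((n : ℤ) * t) * g ^ ((m : ℤ) * s) := by
    have h1 : ((n : ℤ) * t + (m : ℤ) * s) = 1 := by push_cast at hbez; linarith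
    rw [← zpow_add, h1, zpow_one]
  have horder : orderOf g ∣ 0 := dvd_zero _
  have ha : orderOf (g ^ ((n : ℤ) * t)) ∣ m := by
    apply orderOf_dvd_of_pow_eq_one
    rw [← zpow_natCast, ← zpow_mul]
    have : (n : ℤ) * t * m = (orderOf g : ℤ) * t := by rw [hg]; push_cast; ring
    rw [this, zpow_mul, zpow_natCast, pow_orderOf_eq_one, one_zpow]
  have hb : orderOf (g ^ ((m : ℤ) * s)) ∣ n := by
    apply orderOf_dvd_of_pow_eq_one
    rw [← zpow_natCast, ← zpow_mul]
    have : (m : ℤ) * s * n = (orderOf g : ℤ) * s := by rw [hg]; push_cast; ring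
    rw [this, zpow_mul, zpow_natCast, pow_orderOf_eq_one, one_zpow]
  have hcomm : Commute (g ^ ((n : ℤ) * t)) (g ^ ((m : ℤ) * s)) :=
    (Commute.refl g).zpow_zpow _ _
  have hdvd : m * n ∣ orderOf (g ^ ((n : ℤ) * t)) * orderOf (g ^ ((m : ℤ) * s)) := by
    rw [← hg]
    calc orderOf g = orderOf (g ^ ((n : ℤ) * t) * g ^ ((m : ℤ) * s)) := by rw [← hgeq]
      _ ∣ _ := hcomm.orderOf_mul_dvd_mul_orderOf
  have heq : orderOf (g ^ ((n : ℤ) * t)) * orderOf (g ^ ((m : ℤ) * s)) = m * n :=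
    Nat.dvd_antisymm (mul_dvd_mul ha hb) hdvd
  have h1 : orderOf (g ^ ((n : ℤ) * t)) = m := by
    obtain ⟨u, hu⟩ := ha
    obtain ⟨v, hv⟩ := hb
    have hou : orderOf (g ^ ((n : ℤ) * t)) ≠ 0 := fun h0 => hm (by simpa [h0] using hu)
    have hov : orderOf (g ^ ((m : ℤ) * s)) ≠ 0 := fun h0 => hn (by simpa [h0] using hv)
    have : u * v = 1 := by
      have := heq
      rw [hu, hv] at this
      nlinarith [Nat.pos_of_ne_zero hou, Nat.pos_of_ne_zero hov]
    have hu1 : u = 1 := Nat.eq_one_of_mul_eq_one_right this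
    rw [hu, hu1, mul_one]
  refine ⟨h1, ?_, hgeq⟩
  have := heq
  rw [h1] at this
  exact Nat.eq_of_mul_eq_mul_left (Nat.pos_of_ne_zero hm) this


lemma myCommuteZpowers {G : Type*} [Group G] {g a b : G} (ha : a ∈ Subgroup.zpowers g)
    (hb : b ∈ Subgroup.zpowers g) : Commute a b := by
  obtain ⟨i, rfl⟩ := Subgroup.mem_zpowers_iff.mp ha
  obtain ⟨j, rfl⟩ := Subgroup.mem_zpowers_iff.mp hb
  exact (Commute.refl g).zpow_zpow i j

lemma myDecomp {G : Type*} [Group G] [Finite G] :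
    ∀ (n : ℕ) (g : G), orderOf g = n →
    ∃ (c : ℕ → G) (hc : ∀ q r, Commute (c q) (c r)),
      (∀ q, c q ∈ Subgroup.zpowers g) ∧
      (∀ q, ∃ m : ℕ, orderOf (c q) = q ^ m) ∧
      (∀ q, q ∉ (orderOf g).primeFactors → c q = 1) ∧
      g = (orderOf g).primeFactors.noncommProd c (fun q _ r _ _ => hc q r) := by
  intro n
  induction n using Nat.strong_induction_on with
  | _ n ih =>
  intro g hg
  rcases eq_or_ne n 1 with rfl | hn1
  · have hg1 : g = 1 := orderOf_eq_one_iff.mp hg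
    refine ⟨fun _ => 1, fun _ _ => Commute.refl 1, fun _ => one_mem _,
      fun q => ⟨0, by simp⟩, fun _ _ => rfl, ?_⟩
    rw [hg1, orderOf_one]
    simp
  · have hn0 : n ≠ 0 := by
      rw [← hg]; exact (orderOf_pos g).ne'
    set q := n.minFac with hqdef
    have hq : q.Prime := Nat.minFac_prime hn1
    have hqdvd : q ∣ n := Nat.minFac_dvd n
    have hqmem : q ∈ n.primeFactors := Nat.mem_primeFactors.mpr ⟨hq, hqdvd, hn0⟩
    set v := n.factorization q with hvdef
    have hv : 0 < v := hq.factorization_pos_of_dvd hn0 hqdvd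
    have hm1 : (q ^ v) ≠ 0 := pow_ne_zero _ hq.pos.ne'
    have hm2 : ordCompl[q] n ≠ 0 := (Nat.ordCompl_pos q hn0).ne'
    have hco : (q ^ v).Coprime (ordCompl[q] n) :=
      Nat.Coprime.pow_left v (Nat.coprime_ordCompl hq hn0)
    have hsplit : q ^ v * ordCompl[q] n = n := Nat.ordProj_mul_ordCompl_eq_self n q
    obtain ⟨a, b, haz, hbz, hoa, hob, hgab⟩ :=
      mySplit hco (hg.trans hsplit.symm) hm1 hm2
    have hlt : ordCompl[q] n < n := by
      have h1 : 1 < q ^ v := Nat.one_lt_pow hv.ne' hq.one_lt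
      calc ordCompl[q] n < q ^ v * ordCompl[q] n := by
            exact lt_mul_of_one_lt_left (Nat.pos_of_ne_zero hm2) h1
        _ = n := hsplit
    obtain ⟨c', hc', hzp', hord', hoff', hprod'⟩ := ih _ hlt b hob
    have hpf2 : (ordCompl[q] n).primeFactors = n.primeFactors.erase q := by
      rw [← Nat.support_factorization, Nat.factorization_ordCompl, Finsupp.support_erase,
        Nat.support_factorization]
    classical
    set c : ℕ → G := Function.update c' q a with hcdef
    have hmemzp : ∀ w, c w ∈ Subgroup.zpowers g := by
      intro w
      rcases eq_or_ne w q with rfl | hne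
      · simpa [hcdef] using haz
      · rw [hcdef, Function.update_of_ne hne]
        exact Subgroup.zpowers_le.mpr hbz (hzp' w)
    have hc : ∀ q' r', Commute (c q') (c r') := fun q' r' =>
      myCommuteZpowers (hmemzp q') (hmemzp r')
    refine ⟨c, hc, hmemzp, ?_, ?_, ?_⟩
    · intro w
      rcases eq_or_ne w q with rfl | hne
      · exact ⟨v, by simpa [hcdef] using hoa⟩
      · rw [hcdef, Function.update_of_ne hne]
        exact hord' w
    · intro w hw
      rw [hg] at hw
      have hne : w ≠ q := fun h => hw (h ▸ hqmem)
      rw [hcdef, Function.update_of_ne hne]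
      apply hoff'
      rw [hob, hpf2]
      exact fun hmem => hw (Finset.mem_of_mem_erase hmem)
    · rw [hg]
      have hins : n.primeFactors = insert q (n.primeFactors.erase q) :=
        (Finset.insert_erase hqmem).symm
      have hfin : n.primeFactors.noncommProd c (fun x _ y _ _ => hc x y) =
          c q * (n.primeFactors.erase q).noncommProd c (fun x _ y _ _ => hc x y) :=
        (Finset.mul_noncommProd_erase _ hqmem _ _ _).symm
      refine Eq.trans ?_ hfin.symm
      have hcq : c q = a := by simp [hcdef]
      rw [hob, hpf2] at hprod'
      have herase : (n.primeFactors.erase q).noncommProd c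
          (fun x hx y hy h => hc x y) = b := by
        exact (Finset.noncommProd_congr rfl
          (fun w hw => show c w = c' w from
            Function.update_of_ne (Finset.ne_of_mem_erase hw) a c') _).trans hprod'.symm
      rw [hcq, herase, ← hgab]


/-- Lemma: `Nil_G(x)` is the intersection of the `Nil_G(x_i)` over the prime components. -/
theorem stmt_7 (G : Type*) [Group G] [Finite G] (x : G) (k : ℕ)
    (p α : Fin k → ℕ) (hp : ∀ i, (p i).Prime) (hinj : Function.Injective p)
    (hα : ∀ i, 0 < α i) (hord : orderOf x = ∏ i, p i ^ α i)
    (y : Fin k → G) (hy : ∀ i, y i ∈ Subgroup.zpowers x)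
    (hyo : ∀ i, orderOf (y i) = p i ^ α i)
    (hcomm : ∀ i j, Commute (y i) (y j))
    (hxy : x = Finset.univ.noncommProd y fun i _ j _ _ => hcomm i j) :
    nilNbhd x = ⋂ i, nilNbhd (y i) := by
  classical
  ext z
  simp only [nilNbhd, Set.mem_iInter, Set.mem_setOf_eq]
  constructor
  · intro hz i
    have hle : closure {y i, z} ≤ closure {x, z} := by
      rw [closure_le]
      apply Set.insert_subset
      · exact Subgroup.zpowers_le.mpr (subset_closure (Set.mem_insert _ _)) (hy i)
      · exact Set.singleton_subset_iff.mpr (subset_closure (by simp))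
    exact myIsNilpotent_of_le hle hz
  · intro hz
    set N := orderOf x * orderOf z with hNdef
    have hN0 : N ≠ 0 := mul_ne_zero (orderOf_pos x).ne' (orderOf_pos z).ne'
    set T := N.primeFactors with hTdef
    obtain ⟨c, hcc, hczp, hcord, hcoff, hcprod⟩ := myDecomp (orderOf z) z rfl
    set X : ℕ → G := fun q => if h : ∃ i, p i = q then y h.choose else 1 with hXdef
    have hXp : ∀ i, X (p i) = y i := by
      intro i
      have h : ∃ j, p j = p i := ⟨i, rfl⟩
      simp only [hXdef, dif_pos h]
      exact congrArg y (hinj h.choose_spec)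
    have hXzp : ∀ q, X q ∈ Subgroup.zpowers x := by
      intro q
      simp only [hXdef]
      split
      · exact hy _
      · exact one_mem _
    -- the q-part subgroups
    have hPpgroup : ∀ q ∈ T, IsPGroup q (closure ({X q, c q} : Set G)) := by
      intro q hqT
      have hq : q.Prime := Nat.prime_of_mem_primeFactors hqT
      haveI : Fact q.Prime := ⟨hq⟩
      by_cases h : ∃ i, p i = q
      · obtain ⟨i, rfl⟩ := h
        set Ni := closure ({y i, z} : Set G) with hNidef
        haveI hni : Group.IsNilpotent ↥Ni := hz i
        have hyNi : y i ∈ Ni := subset_closure (Set.mem_insert _ _)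
        have hzNi : z ∈ Ni := subset_closure (by simp)
        have hcNi : c (p i) ∈ Ni := Subgroup.zpowers_le.mpr hzNi (hczp _)
        obtain ⟨Q⟩ := Sylow.nonempty (p := p i) (G := ↥Ni)
        have hsyl := ((isNilpotent_of_finite_tfae (G := ↥Ni)).out 0 3).mp hni
        have hQn : (Q : Subgroup ↥Ni).Normal := hsyl (p i) ‹_› Q
        obtain ⟨m, hm⟩ := hcord (p i)
        have hy' : (⟨y i, hyNi⟩ : ↥Ni) ∈ Q :=
          myMem_sylow Q hQn (by rw [Subgroup.orderOf_mk, hyo i])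
        have hc' : (⟨c (p i), hcNi⟩ : ↥Ni) ∈ Q :=
          myMem_sylow Q hQn (by rw [Subgroup.orderOf_mk, hm])
        have hle : closure ({X (p i), c (p i)} : Set G) ≤
            (Q : Subgroup ↥Ni).map Ni.subtype := by
          rw [closure_le]
          apply Set.insert_subset
          · rw [hXp i]
            exact Subgroup.mem_map_of_mem _ hy'
          · exact Set.singleton_subset_iff.mpr (Subgroup.mem_map_of_mem _ hc')
        exact (Q.isPGroup'.map Ni.subtype).to_le hle
      · have hX1 : X q = 1 := by simp only [hXdef, dif_neg h]
        have hle : closure ({X q, c q} : Set G) ≤ Subgroup.zpowers (c q) := by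
          rw [closure_le]
          apply Set.insert_subset
          · rw [hX1]; exact one_mem _
          · exact Set.singleton_subset_iff.mpr (Subgroup.mem_zpowers _)
        exact (myIsPGroup_zpowers (hcord q).choose_spec).to_le hle
    -- pairwise commuting
    have hgen : ∀ q ∈ T, ∀ r ∈ T, q ≠ r → ∀ a ∈ ({X q, c q} : Set G),
        ∀ b ∈ ({X r, c r} : Set G), Commute a b := by
      have key : ∀ q ∈ T, ∀ r ∈ T, q ≠ r → Commute (X q) (c r) := by
        intro q hqT r hrT hne
        by_cases h : ∃ i, p i = q
        · obtain ⟨i, rfl⟩ := h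
          rw [hXp i]
          set Ni := closure ({y i, z} : Set G) with hNidef
          haveI hni : Group.IsNilpotent ↥Ni := hz i
          have hyNi : y i ∈ Ni := subset_closure (Set.mem_insert _ _)
          have hzNi : z ∈ Ni := subset_closure (by simp)
          have hcNi : c r ∈ Ni := Subgroup.zpowers_le.mpr hzNi (hczp _)
          obtain ⟨m, hm⟩ := hcord r
          have : Commute (⟨y i, hyNi⟩ : ↥Ni) (⟨c r, hcNi⟩ : ↥Ni) :=
            myCommute_nilpotent (hp i) (Nat.prime_of_mem_primeFactors hrT) hne
              (by rw [Subgroup.orderOf_mk, hyo i]) (by rw [Subgroup.orderOf_mk, hm])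
          exact this.map Ni.subtype
        · simp only [hXdef, dif_neg h]
          exact Commute.one_left _
      intro q hqT r hrT hne a ha b hb
      rcases ha with rfl | ha
      · rcases hb with rfl | hb
        · exact myCommuteZpowers (hXzp q) (hXzp r)
        · rw [Set.mem_singleton_iff] at hb; subst hb
          exact key q hqT r hrT hne
      · rw [Set.mem_singleton_iff] at ha; subst ha
        rcases hb with rfl | hb
        · exact (key r hrT q hqT hne.symm).symm
        · rw [Set.mem_singleton_iff] at hb; subst hb
          exact myCommuteZpowers (hczp q) (hczp r)
    have hPcomm : ∀ q ∈ T, ∀ r ∈ T, q ≠ r → ∀ a ∈ closure ({X q, c q} : Set G),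
        ∀ b ∈ closure ({X r, c r} : Set G), Commute a b := by
      intro q hqT r hrT hne a ha b hb
      have hcent : closure ({X q, c q} : Set G) ≤
          Subgroup.centralizer (closure ({X r, c r} : Set G)) := by
        rw [closure_le]
        intro a' ha'
        rw [SetLike.mem_coe, Subgroup.mem_centralizer_iff]
        intro b' hb'
        have h2 : closure ({X r, c r} : Set G) ≤ Subgroup.centralizer {a'} := by
          rw [closure_le]
          intro b'' hb''
          rw [SetLike.mem_coe, Subgroup.mem_centralizer_iff]
          intro w hw
          rw [Set.mem_singleton_iff] at hw
          rw [hw]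
          exact hgen q hqT r hrT hne a' ha' b'' hb''
        exact (Subgroup.mem_centralizer_iff.mp (h2 hb') a' rfl).symm
      exact ((Subgroup.mem_centralizer_iff.mp (hcent ha)) b hb).symm
    -- assemble
    set P' : {q : ℕ // q ∈ T} → Subgroup G :=
      fun q => closure ({X q.1, c q.1} : Set G) with hP'def
    have hpair : Pairwise fun i j : {q : ℕ // q ∈ T} =>
        ∀ a b : G, a ∈ P' i → b ∈ P' j → Commute a b := by
      intro i j hij a b ha hb
      exact hPcomm i.1 i.2 j.1 j.2 (fun h => hij (Subtype.ext h)) a ha b hb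
    haveI : ∀ i : {q : ℕ // q ∈ T}, Group.IsNilpotent ↥(P' i) := by
      intro i
      haveI : Fact (i.1.Prime) := ⟨Nat.prime_of_mem_primeFactors i.2⟩
      exact (hPpgroup i.1 i.2).isNilpotent
    have hrange : Group.IsNilpotent ↥(Subgroup.noncommPiCoprod hpair).range :=
      nilpotent_of_surjective (Subgroup.noncommPiCoprod hpair).rangeRestrict
        (Subgroup.noncommPiCoprod hpair).rangeRestrict_surjective
    have hsup : (Subgroup.noncommPiCoprod hpair).range = ⨆ i, P' i :=
      Subgroup.noncommPiCoprod_range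
    rw [hsup] at hrange
    have hmemT : ∀ i : Fin k, p i ∈ T := by
      intro i
      refine Nat.mem_primeFactors.mpr ⟨hp i, ?_, hN0⟩
      refine dvd_trans ?_ (dvd_mul_right (orderOf x) (orderOf z))
      rw [hord]
      exact dvd_trans (dvd_pow_self (p i) (hα i).ne') (Finset.dvd_prod_of_mem _ (Finset.mem_univ i))
    have hxmem : x ∈ ⨆ i, P' i := by
      rw [hxy]
      apply Subgroup.noncommProd_mem
      intro i _
      have hyi : y i ∈ P' ⟨p i, hmemT i⟩ := by
        rw [hP'def]
        exact hXp i ▸ subset_closure (Set.mem_insert _ _)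
      exact le_iSup P' ⟨p i, hmemT i⟩ hyi
    have hSsub : (orderOf z).primeFactors ⊆ T :=
      Nat.primeFactors_mono (dvd_mul_left (orderOf z) (orderOf x)) hN0
    have hzmem : z ∈ ⨆ i, P' i := by
      rw [hcprod]
      apply Subgroup.noncommProd_mem
      intro q hq
      have hcq : c q ∈ P' ⟨q, hSsub hq⟩ := by
        rw [hP'def]
        exact subset_closure (by simp)
      exact le_iSup P' ⟨q, hSsub hq⟩ hcq
    have hle : closure ({x, z} : Set G) ≤ ⨆ i, P' i := by
      rw [closure_le]
      exact Set.insert_subset hxmem (Set.singleton_subset_iff.mpr hzmem)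
    exact myIsNilpotent_of_le hle hrange

end Aux
end

section
/- Let G be a finite group and let x, y ∈ G \ Z_∞(G) with xZ_∞(G) ≠ yZ_∞(G). Then the subgroup ⟨x, y⟩ of G is nilpotent if and only if the subgroup ⟨xZ_∞(G), yZ_∞(G)⟩ of G/Z_∞(G) is nilpotent. -/
lemma aux_lcs_step {G : Type*} [Group G] {m n : ℕ}
    (h : Subgroup.lowerCentralSeries (⊤ : Subgroup G) m ≤ Subgroup.upperCentralSeries G (n + 1)) :
    Subgroup.lowerCentralSeries (⊤ : Subgroup G) (m + 1) ≤ Subgroup.upperCentralSeries G n := by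
  rw [lowerCentralSeries_succ, Subgroup.commutator_def, Subgroup.closure_le]
  rintro _ ⟨p, hp, q, -, rfl⟩
  exact Subgroup.mem_upperCentralSeries_succ_iff.mp (h hp) q

lemma aux_lcs_bot {G : Type*} [Group G] :
    ∀ (n m : ℕ), Subgroup.lowerCentralSeries (⊤ : Subgroup G) m ≤ Subgroup.upperCentralSeries G n →
      Subgroup.lowerCentralSeries (⊤ : Subgroup G) (m + n) = ⊥
  | 0, m, h => le_antisymm (by simpa using h) bot_le
  | n + 1, m, h => by
    have := aux_lcs_bot n (m + 1) (aux_lcs_step h)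
    rwa [show m + (n + 1) = m + 1 + n by omega]

lemma aux_nilpotent_of_ker_le_ucs {G H : Type*} [Group G] [Group H] (f : G →* H)
    [hH : Group.IsNilpotent H] {n : ℕ} (hker : f.ker ≤ Subgroup.upperCentralSeries G n) :
    Group.IsNilpotent G := by
  obtain ⟨m, hm⟩ := nilpotent_iff_lowerCentralSeries.mp hH
  rw [nilpotent_iff_lowerCentralSeries]
  refine ⟨m + n, aux_lcs_bot n m (le_trans ?_ hker)⟩
  intro g hg
  have : f g ∈ Subgroup.lowerCentralSeries (⊤ : Subgroup H) m :=
    Subgroup.lowerCentralSeries.map f m (Subgroup.mem_map_of_mem f hg)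
  rw [hm, Subgroup.mem_bot] at this
  exact this

lemma aux_ucs_subgroupOf {G : Type*} [Group G] (H : Subgroup G) :
    ∀ n : ℕ, (Subgroup.upperCentralSeries G n).subgroupOf H ≤ Subgroup.upperCentralSeries H n
  | 0 => by
    intro x hx
    rw [Subgroup.mem_subgroupOf] at hx
    simp only [Subgroup.upperCentralSeries_zero, Subgroup.mem_bot] at hx ⊢
    exact Subtype.ext hx
  | n + 1 => by
    intro x hx
    rw [Subgroup.mem_subgroupOf] at hx
    rw [Subgroup.mem_upperCentralSeries_succ_iff]
    intro y
    apply aux_ucs_subgroupOf H n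
    rw [Subgroup.mem_subgroupOf]
    exact Subgroup.mem_upperCentralSeries_succ_iff.mp hx y.1

/-- Adjacency in Γ(G) corresponds to adjacency in Γ(G/Z_∞(G)). -/
theorem stmt_11 (G : Type*) [Group G] [Finite G] (x y : G)
    (hx : x ∉ hypercenter G) (hy : y ∉ hypercenter G)
    (hxy : QuotientGroup.mk (s := hypercenter G) x ≠ QuotientGroup.mk (s := hypercenter G) y) :
    Group.IsNilpotent ↥(Subgroup.closure ({x, y} : Set G)) ↔
      Group.IsNilpotent ↥(Subgroup.closure
        ({QuotientGroup.mk (s := hypercenter G) x, QuotientGroup.mk (s := hypercenter G) y} :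
          Set (G ⧸ hypercenter G))) := by
  classical
  set Z := hypercenter G with hZ
  set H := Subgroup.closure ({x, y} : Set G) with hH
  have hmap : Subgroup.map (QuotientGroup.mk' Z) H =
      Subgroup.closure ({QuotientGroup.mk (s := Z) x, QuotientGroup.mk (s := Z) y} :
        Set (G ⧸ Z)) := by
    rw [hH, MonoidHom.map_closure, Set.image_pair]
    rfl
  constructor
  · intro h
    rw [← hmap]
    exact nilpotent_of_surjective ((QuotientGroup.mk' Z).subgroupMap H)
      (MonoidHom.subgroupMap_surjective _ H)
  · intro h
    rw [← hmap] at h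
    have hker : ((QuotientGroup.mk' Z).subgroupMap H).ker ≤
        upperCentralSeries H (Nat.card G) := by
      refine le_trans ?_ (aux_ucs_subgroupOf H (Nat.card G))
      intro g hg
      rw [MonoidHom.mem_ker] at hg
      rw [Subgroup.mem_subgroupOf]
      have : QuotientGroup.mk' Z g.1 = 1 := congrArg Subtype.val hg
      have := MonoidHom.mem_ker.mpr this
      rwa [QuotientGroup.ker_mk'] at this
    exact aux_nilpotent_of_ker_le_ucs ((QuotientGroup.mk' Z).subgroupMap H) hker
end

section
/- Let G be a finite solvable group with trivial center and let x be a nontrivial element of G whose order is not coprime to |Fit(G)|. Then x lies in the connected component of Γ(G) containing Fit(G) \ {1}, and there exists a nontrivial element w ∈ Fit(G) such that the distance in Γ(G) between x and w is at most 2. -/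
open Subgroup

section Aux
variable {G : Type*} [Group G]

lemma nilpotent_of_le {H K : Subgroup G} (hHK : H ≤ K)
    (hK : Group.IsNilpotent ↥K) : Group.IsNilpotent ↥H := by
  haveI := hK
  exact nilpotent_of_mulEquiv (Subgroup.subgroupOfEquivOfLe hHK)

lemma ucs_eq_bot (hZ : Subgroup.center G = ⊥) : ∀ n, _root_.upperCentralSeries G n = ⊥
  | 0 => Subgroup.upperCentralSeries_zero G
  | (n+1) => by
    ext g
    rw [show _root_.upperCentralSeries G (n+1) = Subgroup.upperCentralSeries G (n+1) from rfl,
      Subgroup.mem_upperCentralSeries_succ_iff]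
    simp only [show Subgroup.upperCentralSeries G n = ⊥ from ucs_eq_bot hZ n, Subgroup.mem_bot]
    constructor
    · intro h
      have hg : g ∈ Subgroup.center G := by
        rw [Subgroup.mem_center_iff]
        intro y
        have hy := h y
        have hconj : g * y * g⁻¹ = y := by
          have h2 := mul_eq_one_iff_eq_inv.mp hy
          rw [h2, inv_inv]
        calc y * g = (g * y * g⁻¹) * g := by rw [hconj]
        _ = g * y := by group
      rw [hZ] at hg
      exact hg
    · rintro rfl; intro y; group

lemma not_mem_hypercenter_iff_ne_one (hZ : Subgroup.center G = ⊥) (g : G) :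
    g ∉ hypercenter G ↔ g ≠ 1 := by
  unfold hypercenter
  rw [ucs_eq_bot hZ]
  simp

end Aux

section Fitting
set_option maxHeartbeats 800000
variable {G : Type*} [Group G] [Finite G]

/-- For a normal nilpotent subgroup `H` and a prime `p`, there is a normal `p`-subgroup `A ≤ H`
with `p`-coprime relative index. -/
lemma pcore_aux (p : ℕ) [Fact p.Prime] (H : Subgroup G) [hHn : H.Normal]
    (hH : Group.IsNilpotent ↥H) :
    ∃ A : Subgroup G, A.Normal ∧ IsPGroup p A ∧ A ≤ H ∧ ¬ p ∣ A.relIndex H := by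
  haveI := hH
  let Hp : Sylow p ↥H := default
  have h4 := ((isNilpotent_of_finite_tfae (G := ↥H)).out 0 3).mp hH
  have hHpn : (Hp : Subgroup ↥H).Normal := h4 p ‹Fact p.Prime› Hp
  haveI := hHpn
  haveI : (Hp : Subgroup ↥H).Characteristic := Sylow.characteristic_of_normal Hp hHpn
  refine ⟨(Hp : Subgroup ↥H).map H.subtype, inferInstance, Hp.isPGroup'.map H.subtype,
    map_subtype_le _, ?_⟩
  rw [Subgroup.relIndex, Subgroup.subgroupOf,
    Subgroup.comap_map_eq_self_of_injective H.subtype_injective]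
  exact Sylow.not_dvd_index Hp

/-- Fitting's theorem: the join of two normal nilpotent subgroups is nilpotent. -/
lemma sup_normal_nilpotent {H K : Subgroup G} (hHn : H.Normal) (hKn : K.Normal)
    (hH : Group.IsNilpotent ↥H) (hK : Group.IsNilpotent ↥K) :
    Group.IsNilpotent ↥(H ⊔ K) := by
  haveI := hHn; haveI := hKn
  refine ((isNilpotent_of_finite_tfae (G := ↥(H ⊔ K))).out 3 0).mp ?_
  intro p hp P
  obtain ⟨A, hAn, hAp, hAH, hAi⟩ := pcore_aux p H hH
  obtain ⟨B, hBn, hBp, hBK, hBi⟩ := pcore_aux p K hK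
  haveI := hAn; haveI := hBn
  set Jp : Subgroup G := A ⊔ B with hJp
  haveI hJpn : Jp.Normal := Subgroup.sup_normal A B
  have hJpp : IsPGroup p Jp := IsPGroup.to_sup_of_normal_right hAp hBp
  have hJple : Jp ≤ H ⊔ K := sup_le (hAH.trans le_sup_left) (hBK.trans le_sup_right)
  -- the key index computation
  have hnd : ¬ p ∣ Jp.relIndex (H ⊔ K) := by
    set π := QuotientGroup.mk' Jp with hπ
    have e1 : Jp.relIndex (H ⊔ K) = Nat.card ((H ⊔ K).map π) := by
      have := Subgroup.relIndex_ker (K := H ⊔ K) (QuotientGroup.mk' Jp)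
      rwa [QuotientGroup.ker_mk'] at this
    have e2 : (H ⊔ K).map π = H.map π ⊔ K.map π := Subgroup.map_sup H K π
    haveI hH'n : (H.map π).Normal := Subgroup.Normal.map ‹H.Normal› π
      (QuotientGroup.mk'_surjective Jp)
    have hcH : ¬ p ∣ Nat.card (H.map π) := by
      intro hdvd
      have e3 : Nat.card (H.map π) = Jp.relIndex H := by
        have := Subgroup.relIndex_ker (K := H) (QuotientGroup.mk' Jp)
        rw [QuotientGroup.ker_mk'] at this
        exact this.symm
      have : Jp.relIndex H ∣ A.relIndex H := Subgroup.relIndex_dvd_of_le_left H le_sup_left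
      exact hAi (dvd_trans (e3 ▸ hdvd) this)
    have hcK : ¬ p ∣ Nat.card (K.map π) := by
      intro hdvd
      have e3 : Nat.card (K.map π) = Jp.relIndex K := by
        have := Subgroup.relIndex_ker (K := K) (QuotientGroup.mk' Jp)
        rw [QuotientGroup.ker_mk'] at this
        exact this.symm
      have : Jp.relIndex K ∣ B.relIndex K := Subgroup.relIndex_dvd_of_le_left K le_sup_right
      exact hBi (dvd_trans (e3 ▸ hdvd) this)
    rw [e1, e2]
    set H' := H.map π
    set K' := K.map π
    set S : Subgroup (G ⧸ Jp) := H' ⊔ K' with hS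
    intro hdvd
    have e4 : Nat.card ↥(H'.subgroupOf S) * (H'.subgroupOf S).index = Nat.card ↥S :=
      Subgroup.card_mul_index _
    have e5 : Nat.card ↥(H'.subgroupOf S) = Nat.card ↥H' :=
      Nat.card_congr (Subgroup.subgroupOfEquivOfLe le_sup_left).toEquiv
    have e6 : (H'.subgroupOf S).index = H'.relIndex K' := by
      rw [← Subgroup.relIndex, hS, Subgroup.relIndex_sup_left]
    have hrel : H'.relIndex K' ∣ Nat.card ↥K' := Subgroup.index_dvd_card _
    rw [← e4, e5, e6] at hdvd
    rcases (Nat.Prime.dvd_mul hp.1).mp hdvd with h | h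
    · exact hcH h
    · exact hcK (h.trans hrel)
  -- now the Sylow argument
  set Jp' : Subgroup ↥(H ⊔ K) := Jp.subgroupOf (H ⊔ K) with hJp'
  haveI : Jp'.Normal := Subgroup.normal_subgroupOf
  have hJp'p : IsPGroup p Jp' :=
    hJpp.of_equiv (Subgroup.subgroupOfEquivOfLe hJple).symm
  have hle : Jp' ≤ (P : Subgroup ↥(H ⊔ K)) := by
    have h2 := P.3 (IsPGroup.to_sup_of_normal_left hJp'p P.isPGroup') le_sup_right
    exact le_sup_left.trans h2.le
  have hge : (P : Subgroup ↥(H ⊔ K)) ≤ Jp' := by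
    have h3 : Jp'.relIndex ↑P * (P : Subgroup ↥(H ⊔ K)).index = Jp'.index :=
      Subgroup.relIndex_mul_index hle
    have hnd2 : ¬ p ∣ Jp'.index := hnd
    have hnd' : ¬ p ∣ Jp'.relIndex ↑P := by
      intro h
      exact hnd2 (h3 ▸ Dvd.dvd.mul_right h _)
    have hdvd2 : Jp'.relIndex ↑P ∣ Nat.card ↥(P : Subgroup ↥(H ⊔ K)) :=
      Subgroup.index_dvd_card _
    obtain ⟨n, hn⟩ := (IsPGroup.iff_card (p := p)).mp P.isPGroup'
    rw [hn] at hdvd2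
    obtain ⟨k, hk, hkeq⟩ := (Nat.dvd_prime_pow hp.1).mp hdvd2
    have hk0 : k = 0 := by
      by_contra hk0
      exact hnd' (hkeq ▸ dvd_pow_self p hk0)
    rw [hk0, pow_zero] at hkeq
    have : Jp'.subgroupOf ↑P = ⊤ := Subgroup.index_eq_one.mp hkeq
    exact (Subgroup.subgroupOf_eq_top).mp this
  have : (P : Subgroup ↥(H ⊔ K)) = Jp' := le_antisymm hge hle
  rw [this]
  infer_instance

lemma fitting_normal_nilpotent (G : Type*) [Group G] [Finite G] :
    (fitting G).Normal ∧ Group.IsNilpotent ↥(fitting G) := by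
  set S := {H : Subgroup G | H.Normal ∧ Group.IsNilpotent ↥H} with hSdef
  haveI : Finite (Subgroup G) := Finite.of_injective _ SetLike.coe_injective
  have hbot : (⊥ : Subgroup G) ∈ S := ⟨inferInstance, inferInstance⟩
  obtain ⟨M, hMS, hmax⟩ : ∃ M ∈ S, ∀ a ∈ S, id M ≤ id a → id M = id a := by
    obtain ⟨M, hM⟩ := (Set.toFinite S).exists_maximal ⟨⊥, hbot⟩
    exact ⟨M, hM.1, fun a ha h => le_antisymm h (hM.2 ha h)⟩
  have hub : ∀ H ∈ S, H ≤ M := by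
    intro H hH
    have hsup : H ⊔ M ∈ S := by
      haveI := hH.1; haveI := hMS.1
      exact ⟨inferInstance, sup_normal_nilpotent hH.1 hMS.1 hH.2 hMS.2⟩
    have := hmax _ hsup le_sup_right
    simp only [id] at this
    exact le_sup_left.trans this.ge
  have heq : fitting G = M := le_antisymm (sSup_le hub) (le_sSup hMS)
  rw [heq]
  exact hMS

end Fitting

lemma reach_dist2 {V : Type*} {Γ : SimpleGraph V} {a b c : V}
    (h1 : a = b ∨ Γ.Adj a b) (h2 : b = c ∨ Γ.Adj b c) :
    Γ.Reachable a c ∧ Γ.dist a c ≤ 2 := by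
  rcases h1 with rfl | h1 <;> rcases h2 with rfl | h2
  · exact ⟨SimpleGraph.Reachable.refl _, by rw [SimpleGraph.dist_self]; omega⟩
  · exact ⟨h2.reachable, le_trans (SimpleGraph.dist_le h2.toWalk) (by simp)⟩
  · exact ⟨h1.reachable, le_trans (SimpleGraph.dist_le h1.toWalk) (by simp)⟩
  · refine ⟨(h1.reachable).trans h2.reachable, ?_⟩
    have := SimpleGraph.dist_le (SimpleGraph.Walk.cons h1 h2.toWalk)
    simpa using this


/-- Elements of order not coprime to |Fit(G)| lie in the component containing
`Fit(G) \ {1}`, at distance at most 2 from it. -/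
theorem stmt_15 (G : Type*) [Group G] [Finite G] (hsolv : IsSolvable G)
    (hZ : Subgroup.center G = ⊥) (x : {g : G // g ∉ hypercenter G})
    (hx : ¬ Nat.Coprime (orderOf (x : G)) (Nat.card (fitting G))) :
    (∀ w : {g : G // g ∉ hypercenter G}, (w : G) ∈ fitting G →
        (nilGraph G).Reachable x w) ∧
      ∃ w : {g : G // g ∉ hypercenter G}, (w : G) ∈ fitting G ∧
        (nilGraph G).Reachable x w ∧ (nilGraph G).dist x w ≤ 2 := by
  classical
  obtain ⟨hFn, hFnil⟩ := fitting_normal_nilpotent G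
  haveI := hFn
  obtain ⟨p, pp, hpdvd⟩ := Nat.exists_prime_and_dvd hx
  haveI : Fact p.Prime := ⟨pp⟩
  have hp1 : p ∣ orderOf (x : G) := hpdvd.trans (Nat.gcd_dvd_left _ _)
  have hp2 : p ∣ Nat.card (fitting G) := hpdvd.trans (Nat.gcd_dvd_right _ _)
  set y : G := (x : G) ^ (orderOf (x : G) / p) with hydef
  have hxord : orderOf (x : G) ≠ 0 := (orderOf_pos (x : G)).ne'
  have hyord : orderOf y = p := orderOf_pow_orderOf_div hxord hp1
  have hy1 : y ≠ 1 := by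
    intro h; rw [h, orderOf_one] at hyord; exact pp.ne_one hyord.symm
  obtain ⟨n, hnord⟩ := exists_prime_orderOf_dvd_card' (G := ↥(fitting G)) p hp2
  have hnord' : orderOf (n : G) = p := (Subgroup.orderOf_coe n).trans hnord
  have hn1 : (n : G) ≠ 1 := by
    intro h; rw [h, orderOf_one] at hnord'; exact pp.ne_one hnord'.symm
  haveI : Finite (Subgroup G) := Finite.of_injective _ SetLike.coe_injective
  haveI : Finite (Sylow p G) :=
    Finite.of_injective (fun P : Sylow p G => (P : Subgroup G)) (fun P Q h => Sylow.ext h)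
  have hyP : IsPGroup p (Subgroup.zpowers y) :=
    IsPGroup.of_card (by rw [Nat.card_zpowers, hyord, pow_one])
  have hnP : IsPGroup p (Subgroup.zpowers (n : G)) :=
    IsPGroup.of_card (by rw [Nat.card_zpowers, hnord', pow_one])
  obtain ⟨Q, hQy⟩ := hyP.exists_le_sylow
  obtain ⟨Q', hQn⟩ := hnP.exists_le_sylow
  obtain ⟨g, hg⟩ := MulAction.exists_smul_eq G Q' Q
  set w : G := g * (n : G) * g⁻¹ with hwdef
  have hwF : w ∈ fitting G := hFn.conj_mem _ n.2 g
  have hinv : g⁻¹ * w * g = (n : G) := by rw [hwdef]; group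
  have hw1 : w ≠ 1 := by
    intro h
    apply hn1
    rw [← hinv, h]; group
  have hwQ : w ∈ (Q : Subgroup G) := by
    rw [← hg, Sylow.smul_def, Sylow.pointwise_smul_def,
      Subgroup.mem_pointwise_smul_iff_inv_smul_mem]
    have hconj : (MulAut.conj g)⁻¹ • w = g⁻¹ * w * g := rfl
    rw [hconj, hinv]
    exact hQn (Subgroup.mem_zpowers _)
  have hyQ : y ∈ (Q : Subgroup G) := hQy (Subgroup.mem_zpowers _)
  have hvert : ∀ a : G, a ≠ 1 → a ∉ hypercenter G := fun a ha =>
    (not_mem_hypercenter_iff_ne_one hZ a).mpr ha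
  set yv : {a : G // a ∉ hypercenter G} := ⟨y, hvert y hy1⟩ with hyv
  set wv : {a : G // a ∉ hypercenter G} := ⟨w, hvert w hw1⟩ with hwv
  have mk : ∀ (u v : {a : G // a ∉ hypercenter G}),
      Group.IsNilpotent ↥(Subgroup.closure ({u.1, v.1} : Set G)) →
      u = v ∨ (nilGraph G).Adj u v := by
    intro u v hnil
    by_cases h : u = v
    · exact Or.inl h
    · exact Or.inr (show u ≠ v ∧ Group.IsNilpotent ↥(Subgroup.closure ({u.1, v.1} : Set G)) from ⟨h, hnil⟩)
  have hnil1 : Group.IsNilpotent ↥(Subgroup.closure ({(x : G), y} : Set G)) := by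
    apply nilpotent_of_le (K := Subgroup.zpowers (x : G))
    · rw [Subgroup.closure_le]
      intro a ha
      simp only [Set.mem_insert_iff, Set.mem_singleton_iff] at ha
      rcases ha with rfl | rfl
      · exact Subgroup.mem_zpowers _
      · exact Subgroup.pow_mem _ (Subgroup.mem_zpowers _) _
    · open scoped IsMulCommutative in infer_instance
  have hnil2 : Group.IsNilpotent ↥(Subgroup.closure ({y, w} : Set G)) := by
    apply nilpotent_of_le (K := (Q : Subgroup G))
    · rw [Subgroup.closure_le]
      intro a ha
      simp only [Set.mem_insert_iff, Set.mem_singleton_iff] at ha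
      rcases ha with rfl | rfl
      · exact hyQ
      · exact hwQ
    · exact Q.isPGroup'.isNilpotent
  have h1 := mk x yv hnil1
  have h2 := mk yv wv hnil2
  obtain ⟨R1, hd⟩ := reach_dist2 h1 h2
  constructor
  · intro w' hw'
    have hnil3 : Group.IsNilpotent ↥(Subgroup.closure ({w, (w' : G)} : Set G)) := by
      apply nilpotent_of_le (K := fitting G) _ hFnil
      rw [Subgroup.closure_le]
      intro a ha
      simp only [Set.mem_insert_iff, Set.mem_singleton_iff] at ha
      rcases ha with rfl | rfl
      · exact hwF
      · exact hw'
    rcases mk wv w' hnil3 with heq | hadj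
    · exact heq ▸ R1
    · exact R1.trans hadj.reachable
  · exact ⟨wv, hwF, R1, hd⟩
end
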